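/- arXiv:quant-ph/0510058 — 3 statements merged into one kernel-verified Lean document; each statement's English description precedes it below -/
import Mathlib

section
/- Let v_1,...,v_N ∈ L^2([0,∞)), λ ∈ ℝ, and real numbers ω_1 ≤ ... ≤ ω_N. For E < 0 define the Hermitian matrix K(E) = K_0 - λ² S(E), where K_0 = diag(ω_1,...,ω_N) and S_{nn'}(E) = ∫_0^∞ v_n*(ω)v_{n'}(ω)/(ω-E) dω. Let κ_1(E) ≤ ... ≤ κ_N(E) be the eigenvalues of K(E) in increasing order. Then for each fixed n, κ_n is monotone nonincreasing in E: if E' ≤ E < 0 then κ_n(E') ≥ κ_n(E). -/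
open MeasureTheory ComplexOrder
open scoped InnerProductSpace ENNReal

/-- The matrix `S(E)` with entries `∫_0^∞ v_n*(ω) v_{n'}(ω)/(ω - E) dω`. -/
noncomputable def Smat (N : ℕ) (v : Fin N → ℝ → ℂ) (E : ℝ) : Matrix (Fin N) (Fin N) ℂ :=
  Matrix.of fun n n' =>
    ∫ ω in Set.Ioi (0 : ℝ), (starRingEnd ℂ) (v n ω) * v n' ω / ((ω : ℂ) - (E : ℂ))

/-- `K(E) = diag(ω_1,…,ω_N) - λ² S(E)`. -/
noncomputable def Kmat (N : ℕ) (v : Fin N → ℝ → ℂ) (w : Fin N → ℝ) (lam : ℝ) (E : ℝ) :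
    Matrix (Fin N) (Fin N) ℂ :=
  Matrix.diagonal (fun n => (w n : ℂ)) - ((lam : ℂ) ^ 2) • Smat N v E

/-- The eigenvalues of a Hermitian matrix, listed in increasing order. -/
noncomputable def sortedEig {N : ℕ} {A : Matrix (Fin N) (Fin N) ℂ} (hA : A.IsHermitian) :
    Fin N → ℝ :=
  hA.eigenvalues ∘ Tuple.sort hA.eigenvalues


lemma inner_eq_zero_of_mem_span {ι E : Type*} [NormedAddCommGroup E] [InnerProductSpace ℂ E]
    {b : ι → E} (hb : Orthonormal ℂ b) (s : Set ι) {x : E}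
    (hx : x ∈ Submodule.span ℂ (b '' s)) {j : ι} (hj : j ∉ s) :
    ⟪b j, x⟫_ℂ = 0 := by
  induction hx using Submodule.span_induction with
  | mem y hy =>
    obtain ⟨i, his, rfl⟩ := hy
    exact hb.2 (by rintro rfl; exact hj his)
  | zero => simp
  | add y z _ _ hy hz => simp [inner_add_right, hy, hz]
  | smul c y _ hy => simp [inner_smul_right, hy]

lemma toEuclideanLin_eigenvectorBasis {N : ℕ} {A : Matrix (Fin N) (Fin N) ℂ}
    (hA : A.IsHermitian) (i : Fin N) :
    Matrix.toEuclideanLin A (hA.eigenvectorBasis i) =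
      (hA.eigenvalues i : ℂ) • hA.eigenvectorBasis i := by
  have h := hA.mulVec_eigenvectorBasis i
  ext j
  have := congrFun h j
  simpa [Matrix.toEuclideanLin_apply, Complex.real_smul] using this

lemma rayleigh_repr {N : ℕ} {A : Matrix (Fin N) (Fin N) ℂ} (hA : A.IsHermitian)
    (x : EuclideanSpace ℂ (Fin N)) :
    RCLike.re ⟪x, Matrix.toEuclideanLin A x⟫_ℂ =
      ∑ i, hA.eigenvalues i * ‖⟪hA.eigenvectorBasis i, x⟫_ℂ‖ ^ 2 := by
  have hsym := (Matrix.isHermitian_iff_isSymmetric).1 hA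
  set u := hA.eigenvectorBasis with hu
  have h1 : ⟪x, Matrix.toEuclideanLin A x⟫_ℂ =
      ∑ i, (hA.eigenvalues i : ℂ) * (⟪x, u i⟫_ℂ * ⟪u i, x⟫_ℂ) := by
    rw [← u.sum_inner_mul_inner x (Matrix.toEuclideanLin A x)]
    refine Finset.sum_congr rfl fun i _ => ?_
    have : ⟪u i, Matrix.toEuclideanLin A x⟫_ℂ =
        (hA.eigenvalues i : ℂ) * ⟪u i, x⟫_ℂ := by
      rw [← hsym (u i) x, toEuclideanLin_eigenvectorBasis hA i, inner_smul_left]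
      simp [hu]
    rw [this]; ring
  rw [h1, map_sum]
  refine Finset.sum_congr rfl fun i _ => ?_
  rw [← inner_conj_symm x (u i), RCLike.conj_mul]
  simp [RCLike.mul_re, ← Complex.ofReal_pow]

lemma norm_sq_repr {N : ℕ} (b : OrthonormalBasis (Fin N) ℂ (EuclideanSpace ℂ (Fin N)))
    (x : EuclideanSpace ℂ (Fin N)) :
    ‖x‖ ^ 2 = ∑ i, ‖⟪b i, x⟫_ℂ‖ ^ 2 := by
  have h := b.sum_inner_mul_inner x x
  have h2 : RCLike.re ⟪x, x⟫_ℂ = ‖x‖ ^ 2 := by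
    rw [← inner_self_eq_norm_sq (𝕜 := ℂ)]
  rw [← h2, ← h, map_sum]
  refine Finset.sum_congr rfl fun i _ => ?_
  rw [← inner_conj_symm x (b i), RCLike.conj_mul]
  simp [RCLike.mul_re, ← Complex.ofReal_pow]

lemma weyl_mono {N : ℕ} {A B : Matrix (Fin N) (Fin N) ℂ} (hA : A.IsHermitian) (hB : B.IsHermitian)
    (hBA : (B - A).PosSemidef) (n : Fin N) : sortedEig hA n ≤ sortedEig hB n := by
  classical
  set σ := Tuple.sort hA.eigenvalues with hσ
  set τ := Tuple.sort hB.eigenvalues with hτ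
  set u := hA.eigenvectorBasis with hu
  set v := hB.eigenvectorBasis with hv
  set sU : Set (Fin N) := σ '' {i | n ≤ i} with hsU
  set sV : Set (Fin N) := τ '' {i | i ≤ n} with hsV
  set U : Submodule ℂ (EuclideanSpace ℂ (Fin N)) := Submodule.span ℂ (u '' sU) with hUdef
  set V : Submodule ℂ (EuclideanSpace ℂ (Fin N)) := Submodule.span ℂ (v '' sV) with hVdef
  -- dimensions
  have hcardU : Fintype.card {i : Fin N // n ≤ i} = N - n := by
    rw [Fintype.card_eq.mpr ⟨Equiv.subtypeEquivRight (fun i => (Finset.mem_Ici).symm)⟩,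
      Fintype.card_coe, Fin.card_Ici]
  have hcardV : Fintype.card {i : Fin N // i ≤ n} = n + 1 := by
    rw [Fintype.card_eq.mpr ⟨Equiv.subtypeEquivRight (fun i => (Finset.mem_Iic).symm)⟩,
      Fintype.card_coe, Fin.card_Iic]
  have hrangeU : Set.range (⇑u ∘ fun i : {i : Fin N // n ≤ i} => σ i) = u '' sU := by
    rw [hsU, Set.image_image]
    ext y; simp
  have hrangeV : Set.range (⇑v ∘ fun i : {i : Fin N // i ≤ n} => τ i) = v '' sV := by
    rw [hsV, Set.image_image]
    ext y; simp
  have hUrank : Module.finrank ℂ U = N - n := by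
    have li : LinearIndependent ℂ (⇑u ∘ fun i : {i : Fin N // n ≤ i} => σ i) :=
      (u.orthonormal.comp _ (σ.injective.comp Subtype.coe_injective)).linearIndependent
    rw [hUdef, ← hrangeU, finrank_span_eq_card li, hcardU]
  have hVrank : Module.finrank ℂ V = n + 1 := by
    have li : LinearIndependent ℂ (⇑v ∘ fun i : {i : Fin N // i ≤ n} => τ i) :=
      (v.orthonormal.comp _ (τ.injective.comp Subtype.coe_injective)).linearIndependent
    rw [hVdef, ← hrangeV, finrank_span_eq_card li, hcardV]
  have hsum := Submodule.finrank_sup_add_finrank_inf_eq U V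
  have htop : Module.finrank ℂ (U ⊔ V : Submodule ℂ (EuclideanSpace ℂ (Fin N))) ≤ N := by
    refine le_trans (Submodule.finrank_le _) ?_
    simp [finrank_euclideanSpace_fin]
  have hnN : (n : ℕ) < N := n.isLt
  have hinf : 0 < Module.finrank ℂ (U ⊓ V : Submodule ℂ (EuclideanSpace ℂ (Fin N))) := by
    omega
  obtain ⟨⟨x, hxUV⟩, hx0'⟩ := Module.finrank_pos_iff_exists_ne_zero.mp hinf
  have hxU : x ∈ U := hxUV.1
  have hxV : x ∈ V := hxUV.2
  have hx0 : x ≠ 0 := fun h => hx0' (Subtype.ext h)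
  have hnorm : (0:ℝ) < ‖x‖ ^ 2 := by
    have : (0:ℝ) < ‖x‖ := norm_pos_iff.mpr hx0
    positivity
  -- vanishing coefficients
  have cA : ∀ i : Fin N, i < n → ⟪u (σ i), x⟫_ℂ = 0 := by
    intro i hi
    refine inner_eq_zero_of_mem_span u.orthonormal sU hxU ?_
    rintro ⟨k, hk, hke⟩
    exact absurd (σ.injective hke ▸ hk) (not_le.mpr hi)
  have cB : ∀ i : Fin N, n < i → ⟪v (τ i), x⟫_ℂ = 0 := by
    intro i hi
    refine inner_eq_zero_of_mem_span v.orthonormal sV hxV ?_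
    rintro ⟨k, hk, hke⟩
    exact absurd (τ.injective hke ▸ hk) (not_le.mpr hi)
  -- Rayleigh bounds
  have keyA : sortedEig hA n * ‖x‖ ^ 2 ≤ RCLike.re ⟪x, Matrix.toEuclideanLin A x⟫_ℂ := by
    rw [rayleigh_repr hA x, ← Equiv.sum_comp σ (fun i => hA.eigenvalues i * ‖⟪u i, x⟫_ℂ‖ ^ 2),
      norm_sq_repr u x, ← Equiv.sum_comp σ (fun i => ‖⟪u i, x⟫_ℂ‖ ^ 2), Finset.mul_sum]
    refine Finset.sum_le_sum fun i _ => ?_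
    rcases lt_or_ge i n with hi | hi
    · rw [cA i hi]; simp
    · exact mul_le_mul_of_nonneg_right (Tuple.monotone_sort hA.eigenvalues hi)
        (by positivity)
  have keyB : RCLike.re ⟪x, Matrix.toEuclideanLin B x⟫_ℂ ≤ sortedEig hB n * ‖x‖ ^ 2 := by
    rw [rayleigh_repr hB x, ← Equiv.sum_comp τ (fun i => hB.eigenvalues i * ‖⟪v i, x⟫_ℂ‖ ^ 2),
      norm_sq_repr v x, ← Equiv.sum_comp τ (fun i => ‖⟪v i, x⟫_ℂ‖ ^ 2), Finset.mul_sum]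
    refine Finset.sum_le_sum fun i _ => ?_
    rcases lt_or_ge n i with hi | hi
    · rw [cB i hi]; simp
    · exact mul_le_mul_of_nonneg_right (Tuple.monotone_sort hB.eigenvalues hi)
        (by positivity)
  have keyC : RCLike.re ⟪x, Matrix.toEuclideanLin A x⟫_ℂ ≤
      RCLike.re ⟪x, Matrix.toEuclideanLin B x⟫_ℂ := by
    have h := hBA.re_dotProduct_nonneg ((WithLp.equiv 2 _) x)
    have hrw : ∀ M : Matrix (Fin N) (Fin N) ℂ,
        ⟪x, Matrix.toEuclideanLin M x⟫_ℂ =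
          dotProduct (star ((WithLp.equiv 2 _) x)) (M.mulVec ((WithLp.equiv 2 _) x)) := by
      intro M
      rw [EuclideanSpace.inner_eq_star_dotProduct, dotProduct_comm]
      congr 1
    rw [hrw A, hrw B]
    rw [Matrix.sub_mulVec, dotProduct_sub, map_sub] at h
    linarith
  have hmain : sortedEig hA n * ‖x‖ ^ 2 ≤ sortedEig hB n * ‖x‖ ^ 2 := by linarith
  exact le_of_mul_le_mul_right hmain hnorm

lemma memLp_conj {α} [MeasurableSpace α] {μ : Measure α} {f : α → ℂ} (hf : MemLp f 2 μ) :
    MemLp (fun x => (starRingEnd ℂ) (f x)) 2 μ := by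
  refine ⟨RCLike.continuous_conj.comp_aestronglyMeasurable hf.1, ?_⟩
  have : eLpNorm (fun x => (starRingEnd ℂ) (f x)) 2 μ = eLpNorm f 2 μ :=
    eLpNorm_congr_norm_ae (Filter.Eventually.of_forall fun x => by simp)
  rw [this]; exact hf.2

lemma L2mul {α} [MeasurableSpace α] {μ : Measure α} {f g : α → ℂ} (hf : MemLp f 2 μ)
    (hg : MemLp g 2 μ) : Integrable (fun x => f x * g x) μ := by
  have := hg.smul hf (p := 2) (q := 2) (r := 1)
    (hpqr := ⟨by rw [inv_one]; exact ENNReal.inv_two_add_inv_two⟩)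
  rw [memLp_one_iff_integrable] at this
  exact this

lemma integrable_entry {N : ℕ} {v : Fin N → ℝ → ℂ}
    (hv : ∀ n, MemLp (v n) 2 (volume.restrict (Set.Ioi (0 : ℝ))))
    {F : ℝ} (hF : F < 0) (n n' : Fin N) :
    Integrable (fun ω : ℝ => (starRingEnd ℂ) (v n ω) * v n' ω * ((ω : ℂ) - (F : ℂ))⁻¹)
      (volume.restrict (Set.Ioi (0 : ℝ))) := by
  have hprod : Integrable (fun ω : ℝ => (starRingEnd ℂ) (v n ω) * v n' ω)
      (volume.restrict (Set.Ioi (0 : ℝ))) := L2mul (memLp_conj (hv n)) (hv n')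
  have hmeas : AEStronglyMeasurable (fun ω : ℝ => ((ω : ℂ) - (F : ℂ))⁻¹)
      (volume.restrict (Set.Ioi (0 : ℝ))) := by
    have hm : Measurable (fun ω : ℝ => ((ω : ℂ) - (F : ℂ))⁻¹) :=
      (Complex.measurable_ofReal.sub measurable_const).inv
    exact hm.aestronglyMeasurable
  have hbound : ∀ᵐ (ω : ℝ) ∂(volume.restrict (Set.Ioi (0 : ℝ))),
      ‖((ω : ℂ) - (F : ℂ))⁻¹‖ ≤ (-F)⁻¹ := by
    rw [ae_restrict_iff' measurableSet_Ioi]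
    refine Filter.Eventually.of_forall fun ω hω => ?_
    have h1 : ((ω : ℂ) - (F : ℂ)) = ((ω - F : ℝ) : ℂ) := by push_cast; ring
    rw [h1, norm_inv, Complex.norm_real, Real.norm_eq_abs,
      abs_of_pos (by simp at hω; linarith)]
    apply inv_anti₀ (by linarith) (by simp at hω ⊢; linarith)
  have := hprod.bdd_mul hmeas hbound
  simpa [mul_comm] using this


lemma kmat_diff_psd {N : ℕ} {v : Fin N → ℝ → ℂ}
    (hv : ∀ n, MemLp (v n) 2 (volume.restrict (Set.Ioi (0 : ℝ))))
    (w : Fin N → ℝ) (lam : ℝ) {E E' : ℝ} (hE'E : E' ≤ E) (hE : E < 0)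
    (hH : (Kmat N v w lam E' - Kmat N v w lam E).IsHermitian) :
    (Kmat N v w lam E' - Kmat N v w lam E).PosSemidef := by
  have hE' : E' < 0 := lt_of_le_of_lt hE'E hE
  refine Matrix.PosSemidef.of_dotProduct_mulVec_nonneg hH fun x => ?_
  have hM : Kmat N v w lam E' - Kmat N v w lam E
      = ((lam : ℂ) ^ 2) • (Smat N v E - Smat N v E') := by
    simp only [Kmat, smul_sub]; abel
  rw [hM, Matrix.smul_mulVec, dotProduct_smul]
  set c : ℝ → ℂ := fun ω => ((ω : ℂ) - (E : ℂ))⁻¹ - ((ω : ℂ) - (E' : ℂ))⁻¹ with hc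
  have hint : ∀ n n' : Fin N, Integrable
      (fun ω : ℝ => (starRingEnd ℂ) (v n ω) * v n' ω * c ω) (volume.restrict (Set.Ioi 0)) := by
    intro n n'
    have h1 := integrable_entry hv hE n n'
    have h2 := integrable_entry hv hE' n n'
    simpa [hc, mul_sub, Pi.sub_def] using h1.sub h2
  have hent : ∀ n n' : Fin N, (Smat N v E - Smat N v E') n n'
      = ∫ ω in Set.Ioi (0:ℝ), (starRingEnd ℂ) (v n ω) * v n' ω * c ω := by
    intro n n'
    have h1 := integrable_entry hv hE n n'
    have h2 := integrable_entry hv hE' n n'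
    have h3 : (Smat N v E - Smat N v E') n n'
        = (∫ ω in Set.Ioi (0:ℝ), (starRingEnd ℂ) (v n ω) * v n' ω * ((ω:ℂ)-(E:ℂ))⁻¹)
          - (∫ ω in Set.Ioi (0:ℝ), (starRingEnd ℂ) (v n ω) * v n' ω * ((ω:ℂ)-(E':ℂ))⁻¹) := by
      simp [Smat, Matrix.sub_apply, div_eq_mul_inv]
    rw [h3, ← integral_sub h1 h2]
    congr 1; funext ω; simp only [hc]; ring
  have hterm : ∀ n n' : Fin N, Integrable
      (fun ω : ℝ => (starRingEnd ℂ) (x n) * x n' * ((starRingEnd ℂ) (v n ω) * v n' ω * c ω))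
      (volume.restrict (Set.Ioi 0)) := fun n n' => (hint n n').const_mul _
  set g : ℝ → ℂ := fun ω => ∑ n, x n * v n ω with hg
  have hdot : dotProduct (star x) ((Smat N v E - Smat N v E').mulVec x)
      = ∫ ω in Set.Ioi (0:ℝ), ∑ n, ∑ n', (starRingEnd ℂ) (x n) * x n' *
          ((starRingEnd ℂ) (v n ω) * v n' ω * c ω) := by
    rw [integral_finset_sum _ (fun n _ => integrable_finset_sum _ (fun n' _ => hterm n n'))]
    simp only [dotProduct, Matrix.mulVec, Pi.star_apply, RCLike.star_def]
    refine Finset.sum_congr rfl fun n _ => ?_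
    rw [integral_finset_sum _ (fun n' _ => hterm n n'), Finset.mul_sum]
    refine Finset.sum_congr rfl fun n' _ => ?_
    rw [hent n n']
    rw [show (starRingEnd ℂ) (x n) * ((∫ ω in Set.Ioi (0:ℝ),
        (starRingEnd ℂ) (v n ω) * v n' ω * c ω) * x n')
      = ((starRingEnd ℂ) (x n) * x n') * ∫ ω in Set.Ioi (0:ℝ),
        (starRingEnd ℂ) (v n ω) * v n' ω * c ω from by ring]
    rw [← integral_const_mul]
  set r : ℝ → ℝ := fun ω => ((ω - E)⁻¹ - (ω - E')⁻¹) * Complex.normSq (g ω) with hr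
  have hpoint : ∀ ω : ℝ, (∑ n, ∑ n', (starRingEnd ℂ) (x n) * x n' *
      ((starRingEnd ℂ) (v n ω) * v n' ω * c ω)) = ((r ω : ℝ) : ℂ) := by
    intro ω
    have h1 : (∑ n, ∑ n', (starRingEnd ℂ) (x n) * x n' *
        ((starRingEnd ℂ) (v n ω) * v n' ω * c ω))
        = (starRingEnd ℂ) (g ω) * g ω * c ω := by
      rw [hg]; simp only [map_sum, map_mul]
      rw [Finset.sum_mul_sum]
      rw [Finset.sum_mul]
      refine Finset.sum_congr rfl fun n _ => ?_
      rw [Finset.sum_mul]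
      refine Finset.sum_congr rfl fun n' _ => ?_
      ring
    have hcg : (starRingEnd ℂ) (g ω) * g ω = ((Complex.normSq (g ω) : ℝ) : ℂ) := by
      rw [mul_comm, Complex.mul_conj]
    rw [h1, hcg]
    have h2 : c ω = (((ω - E)⁻¹ - (ω - E')⁻¹ : ℝ) : ℂ) := by
      simp only [hc]; push_cast; ring
    rw [h2, hr]
    push_cast
    ring
  have hnn : 0 ≤ ∫ ω in Set.Ioi (0:ℝ), r ω := by
    refine integral_nonneg_of_ae ?_
    filter_upwards [ae_restrict_mem measurableSet_Ioi] with ω hω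
    simp only [Set.mem_Ioi] at hω
    have h1 : (0:ℝ) < ω - E := by linarith
    have h2 : ω - E ≤ ω - E' := by linarith
    exact mul_nonneg (sub_nonneg.mpr (inv_anti₀ h1 h2)) (Complex.normSq_nonneg _)
  have hfin : (∫ ω in Set.Ioi (0:ℝ), ∑ n, ∑ n', (starRingEnd ℂ) (x n) * x n' *
      ((starRingEnd ℂ) (v n ω) * v n' ω * c ω)) = ((∫ ω in Set.Ioi (0:ℝ), r ω : ℝ) : ℂ) := by
    rw [show (fun ω : ℝ => ∑ n, ∑ n', (starRingEnd ℂ) (x n) * x n' *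
        ((starRingEnd ℂ) (v n ω) * v n' ω * c ω)) = fun ω : ℝ => ((r ω : ℝ) : ℂ) from
      funext hpoint]
    exact integral_ofReal
  rw [hdot, hfin]
  rw [show ((lam : ℂ) ^ 2) • (((∫ ω in Set.Ioi (0:ℝ), r ω : ℝ) : ℂ))
      = (((lam ^ 2 * ∫ ω in Set.Ioi (0:ℝ), r ω : ℝ)) : ℂ) from by push_cast; simp [smul_eq_mul]]
  rw [Complex.zero_le_real]
  positivity

/-- Each `κ_n` is monotone nonincreasing in `E` on `(-∞,0)`. -/
theorem stmt2 (N : ℕ) (v : Fin N → ℝ → ℂ)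
    (hv : ∀ n, MemLp (v n) 2 (volume.restrict (Set.Ioi (0 : ℝ))))
    (w : Fin N → ℝ) (hw : Monotone w) (lam : ℝ)
    (hK : ∀ E : ℝ, E < 0 → (Kmat N v w lam E).IsHermitian)
    (n : Fin N) (E E' : ℝ) (hE'E : E' ≤ E) (hE : E < 0) :
    sortedEig (hK E hE) n ≤ sortedEig (hK E' (lt_of_le_of_lt hE'E hE)) n := by
  have hE' : E' < 0 := lt_of_le_of_lt hE'E hE
  have hH : (Kmat N v w lam E' - Kmat N v w lam E).IsHermitian :=
    (hK E' hE').sub (hK E hE)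
  exact weyl_mono (hK E hE) (hK E' hE') (kmat_diff_psd hv w lam hE'E hE hH) n
end

section
/- Single-level case: let v ∈ L^2([0,∞)), λ ≠ 0, ω_1 ∈ ℝ, and κ(E) = ω_1 - λ² ∫_0^∞ |v(ω)|²/(ω-E) dω for E < 0. If lim_{E↑0} κ(E) < 0 (allowing the limit to be -∞), then the equation κ(E) = E has exactly one solution E < 0. Conversely, if lim_{E↑0} κ(E) ≥ 0 then κ(E) = E has no solution in (-∞, 0). -/
open MeasureTheory Set Filter

/-- Single-level `κ(E) = ω₁ - λ² ∫_0^∞ |v(ω)|²/(ω-E) dω`. -/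
noncomputable def kappa1 (v : ℝ → ℂ) (lam w1 : ℝ) (E : ℝ) : ℝ :=
  w1 - lam ^ 2 * ∫ ω in Set.Ioi (0 : ℝ), ‖v ω‖ ^ 2 / (ω - E)

section helpers

variable {v : ℝ → ℂ}

lemma vsq_int (hv : MemLp v 2 (volume.restrict (Set.Ioi (0:ℝ)))) :
    IntegrableOn (fun ω => ‖v ω‖ ^ 2) (Set.Ioi (0:ℝ)) := by
  have h := hv.integrable_norm_rpow two_ne_zero ENNReal.ofNat_ne_top
  have h2 : (2 : ENNReal).toReal = ((2 : ℕ) : ℝ) := by simp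
  rw [h2] at h
  simpa [Real.rpow_natCast, IntegrableOn] using h

lemma aesm_int (hv : MemLp v 2 (volume.restrict (Set.Ioi (0:ℝ)))) (E : ℝ) :
    AEStronglyMeasurable (fun ω => ‖v ω‖ ^ 2 / (ω - E))
      (volume.restrict (Set.Ioi (0:ℝ))) := by
  exact (((hv.1.norm.aemeasurable.pow_const 2).div
    ((measurable_id.sub_const E).aemeasurable)).aestronglyMeasurable)

lemma int_on (hv : MemLp v 2 (volume.restrict (Set.Ioi (0:ℝ)))) {E : ℝ} (hE : E < 0) :
    IntegrableOn (fun ω => ‖v ω‖ ^ 2 / (ω - E)) (Set.Ioi (0:ℝ)) := by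
  apply Integrable.mono ((vsq_int hv).mul_const (-E)⁻¹) (aesm_int hv E)
  filter_upwards [ae_restrict_mem measurableSet_Ioi] with ω hω
  have hω' : (0:ℝ) < ω := hω
  have h1 : 0 < ω - E := by linarith
  have h2 : (ω - E)⁻¹ ≤ (-E)⁻¹ := by
    apply inv_anti₀ (by linarith) (by linarith)
  have hnn : 0 ≤ ‖v ω‖ ^ 2 := sq_nonneg _
  rw [Real.norm_eq_abs, Real.norm_eq_abs, abs_of_nonneg (div_nonneg hnn h1.le),
    abs_of_nonneg (mul_nonneg hnn (inv_nonneg.mpr (by linarith)))]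
  rw [div_eq_mul_inv]
  exact mul_le_mul_of_nonneg_left h2 hnn

lemma f_mono (hv : MemLp v 2 (volume.restrict (Set.Ioi (0:ℝ)))) {E₁ E₂ : ℝ}
    (h1 : E₁ < 0) (h2 : E₂ < 0) (h12 : E₁ ≤ E₂) :
    (∫ ω in Set.Ioi (0:ℝ), ‖v ω‖ ^ 2 / (ω - E₁)) ≤
      ∫ ω in Set.Ioi (0:ℝ), ‖v ω‖ ^ 2 / (ω - E₂) := by
  apply setIntegral_mono_on (int_on hv h1) (int_on hv h2) measurableSet_Ioi
  intro ω hω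
  have hω' : (0:ℝ) < ω := hω
  gcongr
  all_goals first
    | positivity
    | linarith

lemma f_nonneg (E : ℝ) (hE : E < 0) :
    0 ≤ ∫ ω in Set.Ioi (0:ℝ), ‖v ω‖ ^ 2 / (ω - E) := by
  apply setIntegral_nonneg measurableSet_Ioi
  intro ω hω
  have hω' : (0:ℝ) < ω := hω
  exact div_nonneg (sq_nonneg _) (by linarith)

lemma f_le (hv : MemLp v 2 (volume.restrict (Set.Ioi (0:ℝ)))) {E : ℝ} (hE : E < 0) :
    (∫ ω in Set.Ioi (0:ℝ), ‖v ω‖ ^ 2 / (ω - E)) ≤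
      (∫ ω in Set.Ioi (0:ℝ), ‖v ω‖ ^ 2) * (-E)⁻¹ := by
  rw [← integral_mul_const]
  apply setIntegral_mono_on (int_on hv hE) ((vsq_int hv).mul_const _) measurableSet_Ioi
  intro ω hω
  have hω' : (0:ℝ) < ω := hω
  rw [div_eq_mul_inv]
  gcongr
  all_goals first
    | positivity
    | linarith

lemma f_tendsto_atBot (hv : MemLp v 2 (volume.restrict (Set.Ioi (0:ℝ)))) :
    Tendsto (fun E => ∫ ω in Set.Ioi (0:ℝ), ‖v ω‖ ^ 2 / (ω - E)) atBot (nhds 0) := by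
  set C := ∫ ω in Set.Ioi (0:ℝ), ‖v ω‖ ^ 2 with hC
  have hub : Tendsto (fun E : ℝ => C * (-E)⁻¹) atBot (nhds 0) := by
    have : Tendsto (fun E : ℝ => (-E)⁻¹) atBot (nhds 0) :=
      tendsto_inv_atTop_zero.comp tendsto_neg_atBot_atTop
    simpa using this.const_mul C
  apply tendsto_of_tendsto_of_tendsto_of_le_of_le' tendsto_const_nhds hub
  · filter_upwards [eventually_lt_atBot (0:ℝ)] with E hE using f_nonneg E hE
  · filter_upwards [eventually_lt_atBot (0:ℝ)] with E hE using f_le hv hE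

lemma f_contAt (hv : MemLp v 2 (volume.restrict (Set.Ioi (0:ℝ)))) {E₀ : ℝ} (hE : E₀ < 0) :
    ContinuousAt (fun E => ∫ ω in Set.Ioi (0:ℝ), ‖v ω‖ ^ 2 / (ω - E)) E₀ := by
  apply continuousAt_of_dominated (bound := fun ω => ‖v ω‖ ^ 2 * (-(E₀/2))⁻¹)
  · exact Filter.Eventually.of_forall fun E => aesm_int hv E
  · filter_upwards [Iio_mem_nhds (show E₀ < E₀/2 by linarith)] with E hE'
    filter_upwards [ae_restrict_mem measurableSet_Ioi] with ω hω
    have hω' : (0:ℝ) < ω := hω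
    have hE'' : E < E₀/2 := hE'
    have h1 : 0 < ω - E := by linarith
    rw [Real.norm_eq_abs, abs_of_nonneg (div_nonneg (sq_nonneg _) h1.le), div_eq_mul_inv]
    gcongr
    all_goals first
      | positivity
      | linarith
  · exact (vsq_int hv).mul_const _
  · filter_upwards [ae_restrict_mem measurableSet_Ioi] with ω hω
    have hω' : (0:ℝ) < ω := hω
    have hne : ω - E₀ ≠ 0 := ne_of_gt (by linarith)
    exact ContinuousAt.div continuousAt_const
      (continuousAt_const.sub continuousAt_id) hne

end helpers

/-- If `lim_{E↑0} κ(E) < 0` (possibly `-∞`) then `κ(E) = E` has exactly one negative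
solution; if the limit is `≥ 0` there is no negative solution. -/
theorem stmt7 (v : ℝ → ℂ) (hv : MemLp v 2 (volume.restrict (Set.Ioi (0 : ℝ))))
    (lam : ℝ) (hlam : lam ≠ 0) (w1 : ℝ) :
    ((Filter.Tendsto (kappa1 v lam w1) (nhdsWithin 0 (Set.Iio 0)) Filter.atBot ∨
        ∃ L : ℝ, L < 0 ∧
          Filter.Tendsto (kappa1 v lam w1) (nhdsWithin 0 (Set.Iio 0)) (nhds L)) →
      ∃! E : ℝ, E < 0 ∧ kappa1 v lam w1 E = E) ∧
    (∀ L : ℝ, 0 ≤ L →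
      Filter.Tendsto (kappa1 v lam w1) (nhdsWithin 0 (Set.Iio 0)) (nhds L) →
      ∀ E : ℝ, E < 0 → kappa1 v lam w1 E ≠ E) := by
  set κ := kappa1 v lam w1 with hκdef
  have hlam2 : 0 ≤ lam ^ 2 := sq_nonneg lam
  -- κ is antitone on Iio 0
  have hκmono : ∀ {E₁ E₂ : ℝ}, E₁ < 0 → E₂ < 0 → E₁ ≤ E₂ → κ E₂ ≤ κ E₁ := by
    intro E₁ E₂ h1 h2 h12
    have := f_mono hv h1 h2 h12
    simp only [hκdef, kappa1]
    nlinarith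
  -- g := κ - id, strictly antitone on Iio 0
  set g : ℝ → ℝ := fun E => κ E - E with hgdef
  have hganti : StrictAntiOn g (Set.Iio 0) := by
    intro a ha b hb hab
    have h1 : κ b ≤ κ a := hκmono ha hb hab.le
    simp only [hgdef]
    linarith
  -- κ continuous on Iio 0
  have hκcont : ∀ {E : ℝ}, E < 0 → ContinuousAt κ E := by
    intro E hE
    exact continuousAt_const.sub (continuousAt_const.mul (f_contAt hv hE))
  -- g → atTop as E → -∞
  have hgtop : Tendsto g atBot atTop := by
    have hκlim : Tendsto κ atBot (nhds (w1 - lam ^ 2 * 0)) := by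
      simp only [hκdef, kappa1]
      exact tendsto_const_nhds.sub (tendsto_const_nhds.mul (f_tendsto_atBot hv))
    have hneg : Tendsto (fun E : ℝ => -E) atBot atTop := tendsto_neg_atBot_atTop
    have : Tendsto (fun E => κ E + -E) atBot atTop := hκlim.add_atTop hneg
    simpa [hgdef, sub_eq_add_neg] using this
  constructor
  · -- existence and uniqueness
    intro H
    -- find a < 0 with g a < 0
    have hid0 : Tendsto (fun E : ℝ => E) (nhdsWithin 0 (Set.Iio 0)) (nhds 0) :=
      tendsto_id.mono_left nhdsWithin_le_nhds
    have hex_a : ∃ a : ℝ, a < 0 ∧ g a < 0 := by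
      have hev : ∀ᶠ E in nhdsWithin 0 (Set.Iio 0), g E < 0 := by
        rcases H with H | ⟨L, hL, H⟩
        · have : Tendsto g (nhdsWithin 0 (Set.Iio 0)) atBot := by
            have := H.atBot_add (hid0.neg)
            simpa [hgdef, sub_eq_add_neg] using this
          exact this.eventually (eventually_lt_atBot 0)
        · have hg : Tendsto g (nhdsWithin 0 (Set.Iio 0)) (nhds (L - 0)) := H.sub hid0
          rw [sub_zero] at hg
          exact hg.eventually_lt_const hL
      have hmem : ∀ᶠ E in nhdsWithin (0:ℝ) (Set.Iio 0), E < 0 := by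
        filter_upwards [self_mem_nhdsWithin] with E hE using hE
      haveI : (nhdsWithin (0:ℝ) (Set.Iio 0)).NeBot := nhdsLT_neBot 0
      exact (hmem.and hev).exists
    obtain ⟨a, ha0, hga⟩ := hex_a
    -- find b < a with g b > 0
    have hex_b : ∃ b : ℝ, b < a ∧ 0 < g b :=
      ((eventually_lt_atBot a).and (hgtop.eventually (eventually_gt_atTop 0))).exists
    obtain ⟨b, hba, hgb⟩ := hex_b
    have hb0 : b < 0 := lt_trans hba ha0
    have hsub : Set.Icc b a ⊆ Set.Iio 0 := fun x hx => lt_of_le_of_lt hx.2 ha0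
    have hgcont : ContinuousOn g (Set.Icc b a) := by
      intro x hx
      exact ((hκcont (hsub hx)).sub continuousAt_id).continuousWithinAt
    have hivt := intermediate_value_Icc' hba.le hgcont
    have h0mem : (0:ℝ) ∈ Set.Icc (g a) (g b) := ⟨hga.le, hgb.le⟩
    obtain ⟨c, hc, hgc⟩ := hivt h0mem
    have hc0 : c < 0 := lt_of_le_of_lt hc.2 ha0
    refine ⟨c, ⟨hc0, by simp only [hgdef] at hgc; linarith⟩, ?_⟩
    intro y ⟨hy0, hyfix⟩
    apply hganti.injOn (Set.mem_Iio.mpr hy0) (Set.mem_Iio.mpr hc0)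
    simp only [hgdef] at hgc ⊢
    rw [hyfix]
    linarith
  · -- no solution when limit ≥ 0
    intro L hL hLt E hE
    have hbound : ∀ᶠ E' in nhdsWithin 0 (Set.Iio 0), κ E' ≤ κ E := by
      have hIoi : Set.Ioi E ∈ nhdsWithin (0:ℝ) (Set.Iio 0) :=
        nhdsWithin_le_nhds (Ioi_mem_nhds hE)
      filter_upwards [hIoi, self_mem_nhdsWithin] with E' h1 h2
      exact hκmono hE h2 (le_of_lt h1)
    have hLle : L ≤ κ E := le_of_tendsto hLt hbound
    intro hfix
    rw [hfix] at hLle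
    linarith
end

section
/- Let η ∈ L¹([0,∞)) be of the form η(ω) = ω^p r(ω) with p > 0 and r ∈ C¹([0,∞)). Then the principal-value integral converges from the right: lim_{E↓0} P∫_0^∞ η(ω)/(ω - E) dω = ∫_0^∞ η(ω)/ω dω, where P∫ denotes the Cauchy principal value at ω = E. -/
set_option maxHeartbeats 2000000

open MeasureTheory Set Filter


lemma logzero {E ε : ℝ} (hE : 0 < E) (hε : 0 < ε) (hεE : ε < E/2) :
    ∫ ω in (Set.Ioo (E/2) (3*E/2) \ Set.Ioo (E-ε) (E+ε)), (1:ℝ)/(ω-E) = 0 := by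
  have hset : Set.Ioo (E/2) (3*E/2) \ Set.Ioo (E-ε) (E+ε)
      = Set.Ioc (E/2) (E-ε) ∪ Set.Ico (E+ε) (3*E/2) := by
    ext ω
    simp only [Set.mem_diff, Set.mem_Ioo, Set.mem_union, Set.mem_Ioc, Set.mem_Ico, not_and,
      not_lt]
    constructor
    · rintro ⟨⟨h1, h2⟩, h3⟩
      rcases le_or_gt ω (E-ε) with h | h
      · exact Or.inl ⟨h1, h⟩
      · exact Or.inr ⟨h3 h, h2⟩
    · rintro (⟨h1, h2⟩ | ⟨h1, h2⟩)
      · exact ⟨⟨h1, by linarith⟩, fun h => by linarith⟩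
      · exact ⟨⟨by linarith, h2⟩, fun _ => h1⟩
  have hcont : ∀ a b : ℝ, E ∉ Set.uIcc a b → IntervalIntegrable (fun ω => 1/(ω-E)) volume a b := by
    intro a b hab
    apply ContinuousOn.intervalIntegrable
    apply continuousOn_const.div (by fun_prop)
    intro x hx
    exact sub_ne_zero.mpr (fun h => hab (h ▸ hx))
  have hle1 : E/2 ≤ E - ε := by linarith
  have hle2 : E + ε ≤ 3*E/2 := by linarith
  have hi1 : IntegrableOn (fun ω => 1/(ω-E)) (Set.Ioc (E/2) (E-ε)) volume := by
    refine (intervalIntegrable_iff_integrableOn_Ioc_of_le hle1).mp (hcont _ _ ?_)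
    rw [Set.uIcc_of_le hle1]
    intro h
    have := h.2; linarith
  have hi2 : IntegrableOn (fun ω => 1/(ω-E)) (Set.Ioc (E+ε) (3*E/2)) volume := by
    refine (intervalIntegrable_iff_integrableOn_Ioc_of_le hle2).mp (hcont _ _ ?_)
    rw [Set.uIcc_of_le hle2]
    intro h
    have := h.1; linarith
  have hi2' : IntegrableOn (fun ω => 1/(ω-E)) (Set.Ico (E+ε) (3*E/2)) volume := by
    rw [IntegrableOn, Measure.restrict_congr_set Ico_ae_eq_Ioc]
    exact hi2
  have hdisj : Disjoint (Set.Ioc (E/2) (E-ε)) (Set.Ico (E+ε) (3*E/2)) := by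
    rw [Set.disjoint_left]
    rintro x ⟨_, hx2⟩ ⟨hx3, _⟩
    linarith
  rw [hset, setIntegral_union hdisj measurableSet_Ico hi1 hi2']
  have c1 : ∫ ω in Set.Ioc (E/2) (E-ε), (1:ℝ)/(ω-E) = Real.log ((-ε)/(-(E/2))) := by
    rw [← intervalIntegral.integral_of_le hle1,
      show (∫ x in (E/2)..(E-ε), (1:ℝ)/(x-E)) = ∫ x in (E/2)..(E-ε), (fun y => 1/y) (x - E) from rfl,
      intervalIntegral.integral_comp_sub_right (fun y => 1/y) E,
      show E/2 - E = -(E/2) by ring, show E - ε - E = -ε by ring]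
    apply integral_one_div
    rw [Set.uIcc_of_le (by linarith)]
    intro h
    have := h.2; linarith
  have c2 : ∫ ω in Set.Ico (E+ε) (3*E/2), (1:ℝ)/(ω-E) = Real.log ((E/2)/ε) := by
    rw [setIntegral_congr_set Ico_ae_eq_Ioc, ← intervalIntegral.integral_of_le hle2,
      show (∫ x in (E+ε)..(3*E/2), (1:ℝ)/(x-E)) = ∫ x in (E+ε)..(3*E/2), (fun y => 1/y) (x - E) from rfl,
      intervalIntegral.integral_comp_sub_right (fun y => 1/y) E,
      show E + ε - E = ε by ring, show 3*E/2 - E = E/2 by ring]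
    apply integral_one_div
    rw [Set.uIcc_of_le (by linarith)]
    intro h
    have := h.1; linarith
  rw [c1, c2, neg_div_neg_eq, Real.log_div hε.ne' (by linarith), Real.log_div (by linarith) hε.ne']
  ring

lemma pv_eq (η : ℝ → ℝ) {E LE : ℝ} (hE : 0 < E)
    (hL1 : IntegrableOn η (Set.Ioi 0) volume)
    (hLE : 0 ≤ LE)
    (hLip : ∀ x ∈ Set.Icc (E/2) (3*E/2), ∀ y ∈ Set.Icc (E/2) (3*E/2),
      |η y - η x| ≤ LE * |y - x|)
    {P : ℝ}
    (hPV : Tendsto (fun ε : ℝ =>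
        ∫ ω in Set.Ioi (0:ℝ) \ Set.Ioo (E - ε) (E + ε), η ω / (ω - E))
      (nhdsWithin 0 (Set.Ioi 0)) (nhds P)) :
    P = (∫ ω in Set.Ioi (0:ℝ) \ Set.Ioo (E/2) (3*E/2), η ω / (ω - E))
      + ∫ ω in Set.Ioo (E/2) (3*E/2), (η ω - η E) / (ω - E) := by
  set J : Set ℝ := Set.Ioo (E/2) (3*E/2) with hJ
  have hJsub : J ⊆ Set.Ioi (0:ℝ) := fun ω hω => lt_trans (by linarith) hω.1
  have hJIcc : J ⊆ Set.Icc (E/2) (3*E/2) := Set.Ioo_subset_Icc_self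
  have hEIcc : E ∈ Set.Icc (E/2) (3*E/2) := ⟨by linarith, by linarith⟩
  have aesm_η : AEStronglyMeasurable η (volume.restrict (Set.Ioi 0)) :=
    hL1.aestronglyMeasurable
  have aem_sub : Measurable (fun ω : ℝ => ω - E) := measurable_id.sub measurable_const
  have hgJ : ∀ ω ∈ Set.Icc (E/2) (3*E/2), |(η ω - η E)/(ω - E)| ≤ LE := by
    intro ω hω
    rcases eq_or_ne ω E with rfl | hne
    · simp [hLE]
    · rw [abs_div]
      rw [div_le_iff₀ (abs_pos.mpr (sub_ne_zero.mpr hne))]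
      exact hLip E hEIcc ω hω
  -- integrability of the two pieces
  have h1 : IntegrableOn (fun ω => η ω / (ω - E)) (Set.Ioi 0 \ J) volume := by
    have h0 : IntegrableOn (fun ω => 2/E * ‖η ω‖) (Set.Ioi (0:ℝ)) volume :=
      hL1.norm.const_mul (2/E)
    refine Integrable.mono (h0.mono_set diff_subset) ?_ ?_
    · exact ((aesm_η.mono_measure (Measure.restrict_mono diff_subset le_rfl)).aemeasurable.div
        aem_sub.aemeasurable).aestronglyMeasurable
    · refine (ae_restrict_iff' (measurableSet_Ioi.diff measurableSet_Ioo)).mpr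
        (ae_of_all _ fun ω hω => ?_)
      have hω0 : 0 < ω := hω.1
      have hsep : E/2 ≤ |ω - E| := by
        have := hω.2
        rw [Set.mem_Ioo, not_and, not_lt] at this
        rcases le_or_gt ω (E/2) with h | h
        · rw [abs_sub_comm]
          calc E/2 ≤ E - ω := by linarith
          _ ≤ |E - ω| := le_abs_self _
        · have h2 := this h
          calc E/2 ≤ ω - E := by linarith
          _ ≤ |ω - E| := le_abs_self _
      rw [Real.norm_eq_abs, abs_div, Real.norm_eq_abs, abs_of_nonneg
        (by positivity : (0:ℝ) ≤ 2/E * ‖η ω‖), Real.norm_eq_abs]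
      rw [div_le_iff₀ (lt_of_lt_of_le (by linarith) hsep)]
      calc |η ω| = (2/E * |η ω|) * (E/2) := by field_simp
      _ ≤ (2/E * |η ω|) * |ω - E| := by
          apply mul_le_mul_of_nonneg_left hsep (by positivity)
  have h2 : IntegrableOn (fun ω => (η ω - η E) / (ω - E)) J volume := by
    have hc : IntegrableOn (fun _ : ℝ => LE) J volume := by
      refine (integrableOn_const_iff (C := LE)).mpr (Or.inr ?_)
      rw [hJ, Real.volume_Ioo]; exact ENNReal.ofReal_lt_top
    refine Integrable.mono hc ?_ ?_
    · exact (((aesm_η.mono_measure (Measure.restrict_mono hJsub le_rfl)).aemeasurable.sub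
        aemeasurable_const).div aem_sub.aemeasurable).aestronglyMeasurable
    · refine (ae_restrict_iff' measurableSet_Ioo).mpr (ae_of_all _ fun ω hω => ?_)
      rw [Real.norm_eq_abs, Real.norm_eq_abs, abs_of_nonneg hLE]
      exact hgJ ω (hJIcc hω)
  set A := ∫ ω in Set.Ioi (0:ℝ) \ J, η ω / (ω - E) with hA
  set B := ∫ ω in J, (η ω - η E) / (ω - E) with hB
  set D : ℝ → ℝ := fun ε => ∫ ω in Set.Ioo (E-ε) (E+ε), (η ω - η E) / (ω - E) with hD
  have key : ∀ ε ∈ Set.Ioo (0:ℝ) (E/2),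
      (∫ ω in Set.Ioi (0:ℝ) \ Set.Ioo (E - ε) (E + ε), η ω / (ω - E)) = A + (B - D ε) := by
    intro ε hε
    have hsub2 : Set.Ioo (E-ε) (E+ε) ⊆ J :=
      Set.Ioo_subset_Ioo (by linarith [hε.2]) (by linarith [hε.2])
    have hseteq : Set.Ioi (0:ℝ) \ Set.Ioo (E-ε) (E+ε) = (Set.Ioi 0 \ J) ∪ (J \ Set.Ioo (E-ε) (E+ε)) :=
      (Set.diff_union_diff_cancel hJsub hsub2).symm
    set S := J \ Set.Ioo (E-ε) (E+ε) with hS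
    have hfeq : (fun ω => η ω / (ω - E))
        = fun ω => (η ω - η E) / (ω - E) + η E / (ω - E) := by
      funext ω
      rw [← add_div, sub_add_cancel]
    have hS1 : IntegrableOn (fun ω => (η ω - η E) / (ω - E)) S volume :=
      h2.mono_set diff_subset
    have hS2 : IntegrableOn (fun ω => η E / (ω - E)) S volume := by
      have hc : IntegrableOn (fun _ : ℝ => |η E|/ε) S volume := by
        refine (integrableOn_const_iff (C := |η E|/ε)).mpr (Or.inr ?_)
        exact lt_of_le_of_lt (measure_mono ((Set.diff_subset).trans hJIcc)) (by
          rw [Real.volume_Icc]; exact ENNReal.ofReal_lt_top)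
      refine Integrable.mono hc ?_ ?_
      · exact (aemeasurable_const.div aem_sub.aemeasurable).aestronglyMeasurable
      · refine (ae_restrict_iff' (measurableSet_Ioo.diff measurableSet_Ioo)).mpr
          (ae_of_all _ fun ω hω => ?_)
        have hsep : ε ≤ |ω - E| := by
          have := hω.2
          rw [Set.mem_Ioo, not_and, not_lt] at this
          rcases le_or_gt ω (E - ε) with h | h
          · rw [abs_sub_comm]
            calc ε ≤ E - ω := by linarith
            _ ≤ |E - ω| := le_abs_self _
          · have h2 := this h
            calc ε ≤ ω - E := by linarith
            _ ≤ |ω - E| := le_abs_self _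
        rw [Real.norm_eq_abs, abs_div, Real.norm_eq_abs, abs_of_nonneg
          (div_nonneg (abs_nonneg _) hε.1.le)]
        apply div_le_div₀ (abs_nonneg _) le_rfl hε.1 hsep
    have hfS : IntegrableOn (fun ω => η ω / (ω - E)) S volume := by
      rw [hfeq]; exact hS1.add hS2
    have hdisj : Disjoint (Set.Ioi (0:ℝ) \ J) S :=
      Set.disjoint_left.mpr fun x hx hxS => hx.2 hxS.1
    rw [hseteq, setIntegral_union hdisj (measurableSet_Ioo.diff measurableSet_Ioo) h1 hfS]
    have hsplit : (∫ ω in S, η ω / (ω - E))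
        = (∫ ω in S, (η ω - η E) / (ω - E)) + ∫ ω in S, η E / (ω - E) := by
      rw [hfeq]; exact integral_add hS1 hS2
    have hzero : (∫ ω in S, η E / (ω - E)) = 0 := by
      have : (fun ω => η E / (ω - E)) = fun ω => η E * (1/(ω - E)) := by
        funext ω; rw [mul_one_div]
      rw [this, integral_const_mul, logzero hE hε.1 hε.2, mul_zero]
    have hdiff : (∫ ω in S, (η ω - η E) / (ω - E)) = B - D ε := by
      rw [hS, hB, hD]
      exact integral_diff measurableSet_Ioo h2 hsub2
    rw [hsplit, hzero, hdiff, add_zero]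
  have hDten : Tendsto D (nhdsWithin 0 (Set.Ioi 0)) (nhds 0) := by
    apply squeeze_zero_norm' (a := fun ε => 2*LE*ε)
    · filter_upwards [Ioo_mem_nhdsGT (half_pos hE :
        (0:ℝ) < (E/2))] with ε hε
      have hsub2 : Set.Ioo (E-ε) (E+ε) ⊆ J :=
        Set.Ioo_subset_Ioo (by linarith [hε.2]) (by linarith [hε.2])
      have hb := norm_setIntegral_le_of_norm_le_const (μ := volume)
        (s := Set.Ioo (E-ε) (E+ε)) (C := LE)
        (by rw [Real.volume_Ioo]; exact ENNReal.ofReal_lt_top)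
        (fun ω hω => by
          rw [Real.norm_eq_abs]; exact hgJ ω (hJIcc (hsub2 hω)))
      refine le_trans hb ?_
      rw [measureReal_def, Real.volume_Ioo, ENNReal.toReal_ofReal (by linarith [hε.1.le] : (0:ℝ) ≤ E + ε - (E - ε))]
      have : E + ε - (E - ε) = 2*ε := by ring
      rw [this]; nlinarith [hε.1.le]
    · have : Tendsto (fun ε : ℝ => 2*LE*ε) (nhds 0) (nhds (2*LE*0)) :=
        (continuous_const.mul continuous_id).tendsto 0
      rw [mul_zero] at this
      exact this.mono_left nhdsWithin_le_nhds
  have hT : Tendsto (fun ε : ℝ =>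
      ∫ ω in Set.Ioi (0:ℝ) \ Set.Ioo (E - ε) (E + ε), η ω / (ω - E))
      (nhdsWithin 0 (Set.Ioi 0)) (nhds (A + B)) := by
    have h0 : Tendsto (fun ε : ℝ => A + (B - D ε)) (nhdsWithin 0 (Set.Ioi 0))
        (nhds (A + (B - 0))) :=
      tendsto_const_nhds.add (tendsto_const_nhds.sub hDten)
    rw [sub_zero] at h0
    refine Tendsto.congr' ?_ h0
    filter_upwards [Ioo_mem_nhdsGT (half_pos hE :
      (0:ℝ) < (E/2))] with ε hε
    exact (key ε hε).symm
  exact tendsto_nhds_unique hPV hT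


lemma eta_deriv (η r : ℝ → ℝ) (p : ℝ)
    (hr : ContDiffOn ℝ 1 r (Set.Ici (0 : ℝ)))
    (hη : ∀ ω : ℝ, 0 ≤ ω → η ω = ω ^ p * r ω)
    {x : ℝ} (hx : 0 < x) :
    HasDerivAt η (p * x^(p-1) * r x + x^p * derivWithin r (Set.Ici 0) x) x := by
  have h1 : HasDerivAt (fun y : ℝ => y ^ p) (p * x^(p-1)) x :=
    Real.hasDerivAt_rpow_const (Or.inl hx.ne')
  have hd : DifferentiableAt ℝ r x :=
    ((hr.differentiableOn one_ne_zero) x (le_of_lt hx)).differentiableAt (Ici_mem_nhds hx)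
  have h2 : HasDerivAt r (derivWithin r (Set.Ici 0) x) x := by
    rw [derivWithin_of_mem_nhds (Ici_mem_nhds hx)]
    exact hd.hasDerivAt
  have hmul := h1.mul h2
  exact HasDerivAt.congr_of_eventuallyEq hmul
    (Filter.eventuallyEq_of_mem (Ioi_mem_nhds hx) (fun y hy => hη y (le_of_lt hy)))

lemma eta_lip (η r : ℝ → ℝ) (p M : ℝ) (hp : 0 < p) (hM : 0 ≤ M)
    (hr : ContDiffOn ℝ 1 r (Set.Ici (0 : ℝ)))
    (hη : ∀ ω : ℝ, 0 ≤ ω → η ω = ω ^ p * r ω)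
    (hrM : ∀ x ∈ Set.Icc (0:ℝ) 2, |r x| ≤ M)
    (hdM : ∀ x ∈ Set.Icc (0:ℝ) 2, |derivWithin r (Set.Ici 0) x| ≤ M)
    {E : ℝ} (hE : 0 < E) (hE1 : E ≤ 1) :
    ∀ x ∈ Set.Icc (E/2) (3*E/2), ∀ y ∈ Set.Icc (E/2) (3*E/2),
      |η y - η x| ≤ (p*((E/2)^(p-1) + (3*E/2)^(p-1))*M + 2^p*M) * |y - x| := by
  intro x hx y hy
  have key := Convex.norm_image_sub_le_of_norm_hasDerivWithin_le
    (f := η) (f' := fun z => p * z^(p-1) * r z + z^p * derivWithin r (Set.Ici 0) z)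
    (s := Set.Icc (E/2) (3*E/2))
    (C := p*((E/2)^(p-1) + (3*E/2)^(p-1))*M + 2^p*M)
    (fun z hz => (eta_deriv η r p hr hη
      (lt_of_lt_of_le (half_pos hE) hz.1)).hasDerivWithinAt)
    (fun z hz => ?_) (convex_Icc _ _) hx hy
  · simpa [Real.norm_eq_abs] using key
  · have hz0 : 0 < z := lt_of_lt_of_le (half_pos hE) hz.1
    have hz2 : z ≤ 2 := le_trans hz.2 (by linarith)
    have hzIcc : z ∈ Set.Icc (0:ℝ) 2 := ⟨hz0.le, hz2⟩
    have hzsum : z^(p-1) ≤ (E/2)^(p-1) + (3*E/2)^(p-1) := by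
      rcases le_or_gt p 1 with h | h
      · have h1 : z^(p-1) ≤ (E/2)^(p-1) :=
          Real.rpow_le_rpow_of_nonpos (half_pos hE) hz.1 (by linarith)
        have h2 : (0:ℝ) ≤ (3*E/2)^(p-1) := Real.rpow_nonneg (by linarith) _
        linarith
      · have h1 : z^(p-1) ≤ (3*E/2)^(p-1) :=
          Real.rpow_le_rpow hz0.le hz.2 (by linarith)
        have h2 : (0:ℝ) ≤ (E/2)^(p-1) := Real.rpow_nonneg (by linarith) _
        linarith
    have e1 : |p * z^(p-1) * r z| ≤ p*((E/2)^(p-1) + (3*E/2)^(p-1))*M := by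
      rw [abs_mul, abs_mul, abs_of_pos hp, abs_of_nonneg (Real.rpow_nonneg hz0.le _)]
      calc p * z^(p-1) * |r z| ≤ p * z^(p-1) * M :=
            mul_le_mul_of_nonneg_left (hrM z hzIcc) (by positivity)
      _ ≤ p*((E/2)^(p-1) + (3*E/2)^(p-1))*M :=
            mul_le_mul_of_nonneg_right (mul_le_mul_of_nonneg_left hzsum hp.le) hM
    have e2 : |z^p * derivWithin r (Set.Ici 0) z| ≤ 2^p*M := by
      rw [abs_mul, abs_of_nonneg (Real.rpow_nonneg hz0.le _)]
      exact mul_le_mul (Real.rpow_le_rpow hz0.le hz2 hp.le) (hdM z hzIcc)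
        (abs_nonneg _) (Real.rpow_nonneg (by norm_num) _)
    rw [Real.norm_eq_abs]
    calc |p * z^(p-1) * r z + z^p * derivWithin r (Set.Ici 0) z|
        ≤ |p * z^(p-1) * r z| + |z^p * derivWithin r (Set.Ici 0) z| := abs_add_le _ _
    _ ≤ p*((E/2)^(p-1) + (3*E/2)^(p-1))*M + 2^p*M := add_le_add e1 e2

lemma L_tendsto (p M : ℝ) (hp : 0 < p) :
    Filter.Tendsto (fun E : ℝ => (p*((E/2)^(p-1) + (3*E/2)^(p-1))*M + 2^p*M) * E)
      (nhdsWithin 0 (Set.Ioi 0)) (nhds 0) := by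
  have hc : Filter.Tendsto (fun x : ℝ => x ^ p) (nhds 0) (nhds 0) := by
    have := (Real.continuousAt_rpow_const 0 p (Or.inr hp.le)).tendsto
    rwa [Real.zero_rpow hp.ne'] at this
  have t1 : Filter.Tendsto (fun E : ℝ => (E/2)^p) (nhds 0) (nhds 0) := by
    refine hc.comp ?_
    have : Filter.Tendsto (fun E : ℝ => E/2) (nhds 0) (nhds (0/2)) :=
      (continuous_id.div_const 2).tendsto 0
    simpa using this
  have t2 : Filter.Tendsto (fun E : ℝ => (3*E/2)^p) (nhds 0) (nhds 0) := by
    refine hc.comp ?_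
    have : Filter.Tendsto (fun E : ℝ => 3*E/2) (nhds 0) (nhds (3*0/2)) :=
      ((continuous_const.mul continuous_id).div_const 2).tendsto 0
    simpa using this
  have tmain : Filter.Tendsto
      (fun E : ℝ => p*M*(2*(E/2)^p + (2/3)*(3*E/2)^p) + 2^p*M*E) (nhds 0) (nhds 0) := by
    have h := (((t1.const_mul 2).add (t2.const_mul (2/3))).const_mul (p*M)).add
      ((continuous_id.tendsto 0).const_mul (2^p*M))
    simpa using h
  refine Filter.Tendsto.congr' ?_ (tmain.mono_left nhdsWithin_le_nhds)
  filter_upwards [self_mem_nhdsWithin] with E (hE : 0 < E)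
  have h2 : (E/2) ≠ 0 := by positivity
  have h3 : (3*E/2) ≠ 0 := by positivity
  have e1 : (E/2)^p = (E/2)^(p-1) * (E/2) := by
    rw [← Real.rpow_add_one h2]; ring_nf
  have e2 : (3*E/2)^p = (3*E/2)^(p-1) * (3*E/2) := by
    rw [← Real.rpow_add_one h3]; ring_nf
  rw [e1, e2]; ring

lemma A_tendsto (η : ℝ → ℝ) (p M : ℝ) (hp : 0 < p) (hM : 0 ≤ M)
    (hηM : ∀ ω ∈ Set.Ioc (0:ℝ) 1, |η ω| ≤ M * ω^p)
    (hL1 : IntegrableOn η (Set.Ioi 0) volume) :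
    Filter.Tendsto (fun E : ℝ => ∫ ω in Set.Ioi 0 \ Set.Ioo (E/2) (3*E/2), η ω / (ω - E))
      (nhdsWithin 0 (Set.Ioi 0)) (nhds (∫ ω in Set.Ioi (0:ℝ), η ω / ω)) := by
  set G : ℝ → ℝ := fun ω => 3*|η ω|/ω with hGdef
  have hp1 : IntegrableOn G (Set.Ioc 0 1) volume := by
    have hbase : IntervalIntegrable (fun x : ℝ => x^(p-1)) volume 0 1 :=
      intervalIntegral.intervalIntegrable_rpow' (by linarith)
    have hbase' : IntegrableOn (fun x : ℝ => x^(p-1)) (Set.Ioc 0 1) volume :=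
      (intervalIntegrable_iff_integrableOn_Ioc_of_le zero_le_one).mp hbase
    have hmaj : IntegrableOn (fun x : ℝ => 3*M*x^(p-1)) (Set.Ioc 0 1) volume :=
      hbase'.const_mul (3*M)
    refine Integrable.mono hmaj ?_ ?_
    · have aη : AEMeasurable η (volume.restrict (Set.Ioc (0:ℝ) 1)) :=
        (hL1.aestronglyMeasurable.mono_measure
          (Measure.restrict_mono Set.Ioc_subset_Ioi_self le_rfl)).aemeasurable
      exact (((measurable_abs.comp_aemeasurable aη).const_mul 3).div
        measurable_id.aemeasurable).aestronglyMeasurable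
    · refine (ae_restrict_iff' measurableSet_Ioc).mpr (ae_of_all _ fun ω hω => ?_)
      have hω0 : 0 < ω := hω.1
      have hpow : ω^(p-1) = ω^p/ω := by
        rw [Real.rpow_sub hω0, Real.rpow_one]
      rw [Real.norm_eq_abs, Real.norm_eq_abs,
        abs_of_nonneg (by positivity : (0:ℝ) ≤ 3*|η ω|/ω),
        abs_of_nonneg (by positivity : (0:ℝ) ≤ 3*M*ω^(p-1))]
      calc 3*|η ω|/ω ≤ 3*(M*ω^p)/ω := by
            gcongr
            exact hηM ω hω
      _ = 3*M*ω^(p-1) := by rw [hpow]; ring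
  have hp2 : IntegrableOn G (Set.Ioi 1) volume := by
    have h0 : IntegrableOn (fun ω => 3 * ‖η ω‖) (Set.Ioi (0:ℝ)) volume :=
      hL1.norm.const_mul 3
    have hmaj : IntegrableOn (fun ω => 3 * ‖η ω‖) (Set.Ioi (1:ℝ)) volume :=
      h0.mono_set (Set.Ioi_subset_Ioi (by norm_num))
    refine Integrable.mono hmaj ?_ ?_
    · have aη : AEMeasurable η (volume.restrict (Set.Ioi (1:ℝ))) :=
        (hL1.aestronglyMeasurable.mono_measure
          (Measure.restrict_mono (Set.Ioi_subset_Ioi (by norm_num)) le_rfl)).aemeasurable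
      exact (((measurable_abs.comp_aemeasurable aη).const_mul 3).div
        measurable_id.aemeasurable).aestronglyMeasurable
    · refine (ae_restrict_iff' measurableSet_Ioi).mpr (ae_of_all _ fun ω hω => ?_)
      have hω1 : (1:ℝ) < ω := hω
      rw [Real.norm_eq_abs, Real.norm_eq_abs,
        abs_of_nonneg (by positivity : (0:ℝ) ≤ 3*|η ω|/ω), Real.norm_eq_abs,
        abs_of_nonneg (by positivity : (0:ℝ) ≤ 3*|η ω|)]
      exact div_le_self (by positivity) hω1.le
  have hGint : Integrable G (volume.restrict (Set.Ioi (0:ℝ))) := by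
    have := hp1.union hp2
    rwa [Set.Ioc_union_Ioi_eq_Ioi (by norm_num : (0:ℝ) ≤ 1)] at this
  have hmeas : ∀ᶠ E : ℝ in nhdsWithin 0 (Set.Ioi 0),
      AEStronglyMeasurable
        (fun ω => ((Set.Ioo (E/2) (3*E/2))ᶜ).indicator (fun ω => η ω / (ω - E)) ω)
        (volume.restrict (Set.Ioi (0:ℝ))) := by
    refine Filter.Eventually.of_forall fun E => ?_
    refine AEStronglyMeasurable.indicator ?_ measurableSet_Ioo.compl
    exact (hL1.aestronglyMeasurable.aemeasurable.div
      ((measurable_id.sub measurable_const).aemeasurable)).aestronglyMeasurable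
  have hbound : ∀ᶠ E : ℝ in nhdsWithin 0 (Set.Ioi 0),
      ∀ᵐ ω ∂(volume.restrict (Set.Ioi (0:ℝ))),
        ‖((Set.Ioo (E/2) (3*E/2))ᶜ).indicator (fun ω => η ω / (ω - E)) ω‖ ≤ G ω := by
    filter_upwards [self_mem_nhdsWithin] with E (hE : 0 < E)
    refine (ae_restrict_iff' measurableSet_Ioi).mpr (ae_of_all _ fun ω hω => ?_)
    have hω0 : 0 < ω := hω
    by_cases hmem : ω ∈ Set.Ioo (E/2) (3*E/2)
    · rw [Set.indicator_of_notMem (not_not_intro hmem)]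
      simp only [norm_zero]
      positivity
    · rw [Set.indicator_of_mem (Set.mem_compl hmem)]
      have hsep : ω/3 ≤ |ω - E| := by
        rw [Set.mem_Ioo, not_and, not_lt] at hmem
        rcases le_or_gt ω (E/2) with h | h
        · rw [abs_sub_comm]
          calc ω/3 ≤ E - ω := by linarith
          _ ≤ |E - ω| := le_abs_self _
        · have h2 := hmem h
          calc ω/3 ≤ ω - E := by linarith
          _ ≤ |ω - E| := le_abs_self _
      have habs : |ω - E| ≠ 0 := by
        intro h; rw [h] at hsep; linarith
      rw [Real.norm_eq_abs, abs_div, hGdef]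
      rw [div_le_div_iff₀ (abs_pos.mpr (fun h => habs (by rw [h]; simp))) hω0]
      nlinarith [abs_nonneg (η ω), hsep, abs_pos.mpr
        (show ω - E ≠ 0 from fun h => habs (by rw [h]; simp))]
  have hlim : ∀ᵐ ω ∂(volume.restrict (Set.Ioi (0:ℝ))),
      Filter.Tendsto
        (fun E : ℝ => ((Set.Ioo (E/2) (3*E/2))ᶜ).indicator (fun ω => η ω / (ω - E)) ω)
        (nhdsWithin 0 (Set.Ioi 0)) (nhds (η ω / ω)) := by
    refine (ae_restrict_iff' measurableSet_Ioi).mpr (ae_of_all _ fun ω hω => ?_)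
    have hω0 : 0 < ω := hω
    have hcont : Filter.Tendsto (fun E : ℝ => η ω / (ω - E)) (nhdsWithin 0 (Set.Ioi 0))
        (nhds (η ω / ω)) := by
      have hden : Filter.Tendsto (fun E : ℝ => ω - E) (nhds 0) (nhds (ω - 0)) :=
        tendsto_const_nhds.sub tendsto_id
      rw [sub_zero] at hden
      exact (tendsto_const_nhds.div hden hω0.ne').mono_left nhdsWithin_le_nhds
    refine Filter.Tendsto.congr' ?_ hcont
    filter_upwards [Ioo_mem_nhdsGT
      (by positivity : (0:ℝ) < (2*ω/3))] with E hE
    have hωc : ω ∈ (Set.Ioo (E/2) (3*E/2))ᶜ := by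
      rw [Set.mem_compl_iff, Set.mem_Ioo, not_and, not_lt]
      intro _
      linarith [hE.2]
    rw [Set.indicator_of_mem hωc]
  have hDCT := tendsto_integral_filter_of_dominated_convergence G hmeas hbound hGint hlim
  refine Filter.Tendsto.congr (fun E => ?_) hDCT
  rw [setIntegral_indicator measurableSet_Ioo.compl, ← Set.diff_eq]

open Filter in
/-- If `η(ω) = ω^p r(ω)` with `p > 0`, `r ∈ C¹([0,∞))`, `η ∈ L¹([0,∞))`, and
`PV E` denotes the Cauchy principal value `P∫_0^∞ η(ω)/(ω-E) dω` for `E > 0`,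
then `PV E → ∫_0^∞ η(ω)/ω dω` as `E ↓ 0`. -/
theorem stmt14 (η r : ℝ → ℝ) (p : ℝ) (hp : 0 < p)
    (hr : ContDiffOn ℝ 1 r (Set.Ici (0 : ℝ)))
    (hη : ∀ ω : ℝ, 0 ≤ ω → η ω = ω ^ p * r ω)
    (hL1 : IntegrableOn η (Set.Ioi (0 : ℝ)) volume)
    (PV : ℝ → ℝ)
    (hPV : ∀ E : ℝ, 0 < E →
      Filter.Tendsto
        (fun ε : ℝ =>
          ∫ ω in Set.Ioi (0 : ℝ) \ Set.Ioo (E - ε) (E + ε), η ω / (ω - E))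
        (nhdsWithin 0 (Set.Ioi 0)) (nhds (PV E))) :
    Filter.Tendsto PV (nhdsWithin 0 (Set.Ioi 0))
      (nhds (∫ ω in Set.Ioi (0 : ℝ), η ω / ω)) := by
  -- bounds on r and its derivative on [0,2]
  obtain ⟨C1, hC1⟩ := (isCompact_Icc (a := (0:ℝ)) (b := 2)).exists_bound_of_continuousOn
    (hr.continuousOn.mono (fun x hx => hx.1))
  obtain ⟨C2, hC2⟩ := (isCompact_Icc (a := (0:ℝ)) (b := 2)).exists_bound_of_continuousOn
    ((hr.continuousOn_derivWithin (uniqueDiffOn_Ici 0) le_rfl).mono (fun x hx => hx.1))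
  obtain ⟨M, hM, hrM, hdM⟩ : ∃ M : ℝ, 0 ≤ M ∧ (∀ x ∈ Set.Icc (0:ℝ) 2, |r x| ≤ M) ∧
      (∀ x ∈ Set.Icc (0:ℝ) 2, |derivWithin r (Set.Ici 0) x| ≤ M) := by
    refine ⟨max C1 (max C2 0), le_trans (le_max_right C2 0) (le_max_right C1 _), ?_, ?_⟩
    · exact fun x hx => le_trans (hC1 x hx) (le_max_left _ _)
    · exact fun x hx => le_trans (hC2 x hx)
        (le_trans (le_max_left C2 0) (le_max_right C1 _))
  have hηM : ∀ ω ∈ Set.Ioc (0:ℝ) 1, |η ω| ≤ M * ω^p := by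
    intro ω hω
    rw [hη ω hω.1.le, abs_mul, abs_of_nonneg (Real.rpow_nonneg hω.1.le p), mul_comm]
    exact mul_le_mul_of_nonneg_right (hrM ω ⟨hω.1.le, by linarith [hω.2]⟩)
      (Real.rpow_nonneg hω.1.le p)
  have hL0 : ∀ E : ℝ, 0 < E →
      0 ≤ p*((E/2)^(p-1) + (3*E/2)^(p-1))*M + 2^p*M := by
    intro E hE
    have h1 : (0:ℝ) ≤ (E/2)^(p-1) := Real.rpow_nonneg (by linarith) _
    have h2 : (0:ℝ) ≤ (3*E/2)^(p-1) := Real.rpow_nonneg (by linarith) _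
    have h3 : (0:ℝ) ≤ (2:ℝ)^p := Real.rpow_nonneg (by norm_num) _
    have h4 := mul_nonneg (mul_nonneg hp.le
      (by linarith : (0:ℝ) ≤ (E/2)^(p-1) + (3*E/2)^(p-1))) hM
    have h5 := mul_nonneg h3 hM
    linarith
  have hgJ : ∀ E : ℝ, 0 < E → E ≤ 1 → ∀ ω ∈ Set.Icc (E/2) (3*E/2),
      |(η ω - η E)/(ω - E)| ≤ p*((E/2)^(p-1) + (3*E/2)^(p-1))*M + 2^p*M := by
    intro E hE hE1 ω hω
    rcases eq_or_ne ω E with rfl | hne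
    · simpa using hL0 ω hE
    · rw [abs_div, div_le_iff₀ (abs_pos.mpr (sub_ne_zero.mpr hne))]
      exact eta_lip η r p M hp hM hr hη hrM hdM hE hE1 E ⟨by linarith, by linarith⟩ ω hω
  have hB0 : Tendsto (fun E : ℝ => ∫ ω in Set.Ioo (E/2) (3*E/2), (η ω - η E) / (ω - E))
      (nhdsWithin 0 (Set.Ioi 0)) (nhds 0) := by
    apply squeeze_zero_norm'
      (a := fun E => (p*((E/2)^(p-1) + (3*E/2)^(p-1))*M + 2^p*M) * E)
    · filter_upwards [Ioo_mem_nhdsGT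
        (one_pos : (0:ℝ) < 1)] with E hE
      have hsub : Set.Ioo (E/2) (3*E/2) ⊆ Set.Ioi (0:ℝ) :=
        fun ω hω => lt_trans (by linarith [hE.1] : (0:ℝ) < E/2) hω.1
      have hmono : volume.restrict (Set.Ioo (E/2) (3*E/2)) ≤ volume.restrict (Set.Ioi (0:ℝ)) :=
        Measure.restrict_mono hsub le_rfl
      have hmeas : AEStronglyMeasurable (fun ω => (η ω - η E) / (ω - E))
          (volume.restrict (Set.Ioo (E/2) (3*E/2))) :=
        (((hL1.aestronglyMeasurable.mono_measure hmono).aemeasurable.sub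
          aemeasurable_const).div
          ((measurable_id.sub measurable_const).aemeasurable)).aestronglyMeasurable
      have hb := norm_setIntegral_le_of_norm_le_const (μ := volume)
        (s := Set.Ioo (E/2) (3*E/2))
        (C := p*((E/2)^(p-1) + (3*E/2)^(p-1))*M + 2^p*M)
        (by rw [Real.volume_Ioo]; exact ENNReal.ofReal_lt_top)
        (fun ω hω => by
          rw [Real.norm_eq_abs]
          exact hgJ E hE.1 hE.2.le ω (Set.Ioo_subset_Icc_self hω))
      refine le_trans hb ?_
      rw [measureReal_def, Real.volume_Ioo, ENNReal.toReal_ofReal (by linarith [hE.1] : (0:ℝ) ≤ 3*E/2 - E/2),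
        show 3*E/2 - E/2 = E by ring]
    · exact L_tendsto p M hp
  have hA : Tendsto (fun E : ℝ => ∫ ω in Set.Ioi (0:ℝ) \ Set.Ioo (E/2) (3*E/2), η ω / (ω - E))
      (nhdsWithin 0 (Set.Ioi 0))
      (nhds (∫ ω in Set.Ioi (0:ℝ), η ω / ω)) := A_tendsto η p M hp hM hηM hL1
  have hPVeq : ∀ᶠ E in nhdsWithin (0:ℝ) (Set.Ioi 0), PV E =
      (∫ ω in Set.Ioi (0:ℝ) \ Set.Ioo (E/2) (3*E/2), η ω / (ω - E))
      + ∫ ω in Set.Ioo (E/2) (3*E/2), (η ω - η E) / (ω - E) := by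
    filter_upwards [Ioo_mem_nhdsGT
      (one_pos : (0:ℝ) < 1)] with E hE
    exact pv_eq η hE.1 hL1 (hL0 E hE.1)
      (eta_lip η r p M hp hM hr hη hrM hdM hE.1 hE.2.le) (hPV E hE.1)
  have hsum : Tendsto (fun E : ℝ =>
      (∫ ω in Set.Ioi (0:ℝ) \ Set.Ioo (E/2) (3*E/2), η ω / (ω - E))
      + ∫ ω in Set.Ioo (E/2) (3*E/2), (η ω - η E) / (ω - E))
      (nhdsWithin 0 (Set.Ioi 0))
      (nhds ((∫ ω in Set.Ioi (0:ℝ), η ω / ω) + 0)) := hA.add hB0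
  rw [add_zero] at hsum
  exact Filter.Tendsto.congr' (hPVeq.mono fun E h => h.symm) hsum
end
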